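/- Let D be a finite digraph on n ≥ 4 vertices with δ⁻(D) + δ⁺(D) ≥ n. Then D has diameter at most 2, and for every vertex v, the vertex-deleted subdigraph D − v also has diameter at most 2. -/
import Mathlib


/-- A directed walk of length `n` from `u` to `v` along the arc relation `A`. -/
def DWalk {V : Type*} (A : V → V → Prop) : ℕ → V → V → Prop
  | 0, u, v => u = v
  | n+1, u, v => ∃ w, A u w ∧ DWalk A n w v

/-- Directed distance: length of a shortest directed path (`⊤` if none exists). -/
noncomputable def ddist {V : Type*} (A : V → V → Prop) (u v : V) : ℕ∞ :=
  sInf {k : ℕ∞ | ∃ n : ℕ, k = n ∧ DWalk A n u v}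

/-- The induced subdigraph obtained by deleting vertex `v`. -/
def delRel {V : Type*} (A : V → V → Prop) (v : V) :
    {x : V // x ≠ v} → {x : V // x ≠ v} → Prop :=
  fun a b => A a.1 b.1

noncomputable def outDeg {V : Type*} (A : V → V → Prop) (u : V) : ℕ := Nat.card {w : V // A u w}
noncomputable def inDeg {V : Type*} (A : V → V → Prop) (u : V) : ℕ := Nat.card {w : V // A w u}
noncomputable def minOutDeg {V : Type*} (A : V → V → Prop) : ℕ := sInf (Set.range (outDeg A))
noncomputable def minInDeg {V : Type*} (A : V → V → Prop) : ℕ := sInf (Set.range (inDeg A))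

lemma ddist_le_of_walk {V : Type*} (A : V → V → Prop) {n : ℕ} {u v : V}
    (h : DWalk A n u v) : ddist A u v ≤ n :=
  sInf_le ⟨n, rfl, h⟩

lemma ncard_sum_le {V : Type*} [Fintype V] (S T U : Set V) (hS : S ⊆ U) (hT : T ⊆ U)
    (h : Disjoint S T) : S.ncard + T.ncard ≤ U.ncard := by
  rw [← Set.ncard_union_eq h S.toFinite T.toFinite]
  exact Set.ncard_le_ncard (Set.union_subset hS hT) U.toFinite

lemma outDeg_ge {V : Type*} (A : V → V → Prop) (u : V) :
    minOutDeg A ≤ {w : V | A u w}.ncard := by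
  rw [← Nat.card_coe_set_eq]
  exact Nat.sInf_le ⟨u, rfl⟩

lemma inDeg_ge {V : Type*} (A : V → V → Prop) (u : V) :
    minInDeg A ≤ {w : V | A w u}.ncard := by
  rw [← Nat.card_coe_set_eq]
  exact Nat.sInf_le ⟨u, rfl⟩

theorem stmt1 {V : Type*} [Fintype V] (A : V → V → Prop) (hirr : Irreflexive A)
    (hn : 4 ≤ Fintype.card V)
    (hdeg : Fintype.card V ≤ minInDeg A + minOutDeg A) :
    (∀ u u' : V, u ≠ u' → ddist A u u' ≤ 2) ∧
    (∀ v : V, ∀ u u' : {x : V // x ≠ v}, u ≠ u' → ddist (delRel A v) u u' ≤ 2) := by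
  constructor
  · intro u u' hne
    by_cases h1 : A u u'
    · exact le_trans (ddist_le_of_walk A (n := 1) ⟨u', h1, rfl⟩) (by norm_num)
    · -- find a middle vertex
      by_contra hc
      have hmid : ¬ ∃ w, A u w ∧ A w u' := by
        rintro ⟨w, hw1, hw2⟩
        exact hc (ddist_le_of_walk A (n := 2) ⟨w, hw1, u', hw2, rfl⟩)
      set S : Set V := {w | A u w}
      set T : Set V := {w | A w u'}
      have hdisj : Disjoint S T := by
        rw [Set.disjoint_left]
        intro w hw hw'
        exact hmid ⟨w, hw, hw'⟩
      have hSU : S ⊆ ({u, u'} : Set V)ᶜ := by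
        rintro w hw (h | h)
        · exact hirr _ (h ▸ hw)
        · exact h1 (h ▸ hw)
      have hTU : T ⊆ ({u, u'} : Set V)ᶜ := by
        rintro w hw (h | h)
        · exact h1 (h ▸ hw)
        · exact hirr _ (h ▸ hw)
      have hsum := ncard_sum_le S T _ hSU hTU hdisj
      have hcompl : ({u, u'} : Set V).ncard + (({u, u'} : Set V)ᶜ).ncard = Fintype.card V := by
        rw [Set.ncard_add_ncard_compl, Nat.card_eq_fintype_card]
      rw [Set.ncard_pair hne] at hcompl
      have h1' : minOutDeg A ≤ S.ncard := outDeg_ge A u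
      have h2' : minInDeg A ≤ T.ncard := inDeg_ge A u'
      omega
  · intro v u u' hne
    have hne' : u.1 ≠ u'.1 := fun h => hne (Subtype.ext h)
    by_cases h1 : A u.1 u'.1
    · exact le_trans (ddist_le_of_walk _ (n := 1) ⟨u', h1, rfl⟩) (by norm_num)
    · by_contra hc
      have hmid : ¬ ∃ w : V, w ≠ v ∧ A u.1 w ∧ A w u'.1 := by
        rintro ⟨w, hwv, hw1, hw2⟩
        exact hc (ddist_le_of_walk (delRel A v) (n := 2) ⟨⟨w, hwv⟩, hw1, u', hw2, rfl⟩)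
      set S : Set V := {w | A u.1 w ∧ w ≠ v}
      set T : Set V := {w | A w u'.1 ∧ w ≠ v}
      have hdisj : Disjoint S T := by
        rw [Set.disjoint_left]
        rintro w ⟨hw, hwv⟩ ⟨hw', _⟩
        exact hmid ⟨w, hwv, hw, hw'⟩
      have hSU : S ⊆ ({u.1, u'.1, v} : Set V)ᶜ := by
        rintro w ⟨hw, hwv⟩ (h | h | h)
        · exact hirr _ (h ▸ hw)
        · exact h1 (h ▸ hw)
        · exact hwv h
      have hTU : T ⊆ ({u.1, u'.1, v} : Set V)ᶜ := by
        rintro w ⟨hw, hwv⟩ (h | h | h)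
        · exact h1 (h ▸ hw)
        · exact hirr _ (h ▸ hw)
        · exact hwv h
      have hsum := ncard_sum_le S T _ hSU hTU hdisj
      have hcompl : ({u.1, u'.1, v} : Set V).ncard + (({u.1, u'.1, v} : Set V)ᶜ).ncard
          = Fintype.card V := by
        rw [Set.ncard_add_ncard_compl, Nat.card_eq_fintype_card]
      have htriple : ({u.1, u'.1, v} : Set V).ncard = 3 := by
        rw [Set.ncard_insert_of_notMem (by
          rintro (h | h)
          · exact hne' h
          · exact u.2 h), Set.ncard_pair (fun h => u'.2 h)]
      rw [htriple] at hcompl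
      -- S ⊇ {w | A u w} \ {v}, so ncard S ≥ outdeg - 1
      have hS1 : {w : V | A u.1 w}.ncard ≤ S.ncard + 1 := by
        have : {w : V | A u.1 w} ⊆ insert v S := by
          intro w hw
          by_cases hwv : w = v
          · exact hwv ▸ Set.mem_insert _ _
          · exact Set.mem_insert_of_mem _ ⟨hw, hwv⟩
        calc {w : V | A u.1 w}.ncard ≤ (insert v S).ncard :=
              Set.ncard_le_ncard this (Set.toFinite _)
          _ ≤ S.ncard + 1 := Set.ncard_insert_le _ _
      have hT1 : {w : V | A w u'.1}.ncard ≤ T.ncard + 1 := by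
        have : {w : V | A w u'.1} ⊆ insert v T := by
          intro w hw
          by_cases hwv : w = v
          · exact hwv ▸ Set.mem_insert _ _
          · exact Set.mem_insert_of_mem _ ⟨hw, hwv⟩
        calc {w : V | A w u'.1}.ncard ≤ (insert v T).ncard :=
              Set.ncard_le_ncard this (Set.toFinite _)
          _ ≤ T.ncard + 1 := Set.ncard_insert_le _ _
      have h1' := outDeg_ge A u.1
      have h2' := inDeg_ge A u'.1
      omega
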